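/- There is no decomposition of the metric Lie algebra (g~, g~-metric) as an orthogonal direct sum g~ = g ⊕ a where g is a nilpotent ideal of g~ and a is an abelian Lie subalgebra of g~. -/

import Mathlib

open Matrix
open scoped Matrix

noncomputable section

abbrev V : Type := Fin 5 → ℝ

/-- standard basis of `ℝ⁵` -/
def e (i : Fin 5) : V := Pi.single i 1

/-- the Lie bracket of the solvable Lie algebra `g~`, given by
`[e1,e2]=-e3, [e4,e2]=-e1, [e4,e1]=e2, [e5,e1]=-e1+e3, [e5,e2]=-e2, [e5,e3]=-2e3,`
`[e5,e4]=e1+(7/12)e3`, extended bilinearly and antisymmetrically. -/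
def br (x y : V) : V :=
  ![-(x 3 * y 1) + x 1 * y 3 - x 4 * y 0 + x 0 * y 4 + x 4 * y 3 - x 3 * y 4,
    x 3 * y 0 - x 0 * y 3 - x 4 * y 1 + x 1 * y 4,
    -(x 0 * y 1) + x 1 * y 0 + x 4 * y 0 - x 0 * y 4 - 2 * (x 4 * y 2) + 2 * (x 2 * y 4)
      + (7/12) * (x 4 * y 3) - (7/12) * (x 3 * y 4),
    0, 0]

/-- the indefinite metric `g~` on `ℝ⁵`. -/
def gm (x y : V) : ℝ :=
  (497/576) * x 0 * y 0 + (49/192) * x 1 * y 1 + 2 * (x 2 * y 2)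
    - (7/12) * (x 0 * y 2 + x 2 * y 0) - (245/6144) * (x 3 * y 3) - (1225/6144) * (x 4 * y 4)

/-- span of brackets of elements of two subspaces -/
def brSpan (A B : Submodule ℝ V) : Submodule ℝ V :=
  Submodule.span ℝ {z : V | ∃ x ∈ A, ∃ y ∈ B, z = br x y}

/-- lower central series of a subspace `I` -/
def lcsOf (I : Submodule ℝ V) : ℕ → Submodule ℝ V
  | 0 => I
  | k + 1 => brSpan I (lcsOf I k)

/-- `I` is a nilpotent ideal of `g~` -/
def IsNilpotentIdeal (I : Submodule ℝ V) : Prop :=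
  (∀ x : V, ∀ y ∈ I, br x y ∈ I) ∧ ∃ k : ℕ, lcsOf I k = ⊥

lemma br_add_right (x y z : V) : br x (y + z) = br x y + br x z := by
  funext i; fin_cases i <;> simp [br] <;> ring

lemma br_add_left (x y z : V) : br (x + y) z = br x z + br y z := by
  funext i; fin_cases i <;> simp [br] <;> ring

lemma br_antisymm (x y : V) : br x y = - br y x := by
  funext i; fin_cases i <;> simp [br] <;> ring

/-- The metric Lie algebra `(g~, g~)` admits no standard decomposition: there is no
orthogonal direct sum `g~ = g ⊕ a` with `g` a nilpotent ideal and `a` an abelian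
subalgebra. -/
theorem no_standard_decomposition :
    ¬ ∃ (gI a : Submodule ℝ V), IsNilpotentIdeal gI ∧
      (∀ x ∈ a, ∀ y ∈ a, br x y ∈ a) ∧
      (∀ x ∈ a, ∀ y ∈ a, br x y = 0) ∧
      IsCompl gI a ∧
      (∀ x ∈ gI, ∀ y ∈ a, gm x y = 0) := by
  rintro ⟨gI, a, ⟨hideal, k, hk⟩, -, habel, hcompl, horth⟩
  have hmem : ∀ x : V, x ∈ gI ⊔ a := by
    intro x; rw [hcompl.sup_eq_top]; trivial
  -- every bracket lies in gI
  have hbr : ∀ x y : V, br x y ∈ gI := by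
    intro x y
    obtain ⟨xg, hxg, xa, hxa, hx⟩ := Submodule.mem_sup.mp (hmem x)
    obtain ⟨yg, hyg, ya, hya, hy⟩ := Submodule.mem_sup.mp (hmem y)
    rw [← hx, ← hy, br_add_right, br_add_left, br_add_left, habel xa hxa ya hya]
    have h1 : br xg yg ∈ gI := hideal _ _ hyg
    have h2 : br xa yg ∈ gI := hideal _ _ hyg
    have h3 : br xg ya ∈ gI := by
      rw [br_antisymm]; exact neg_mem (hideal _ _ hxg)
    simpa using add_mem (add_mem h1 h2) (add_mem h3 (zero_mem gI))
  -- the first three basis vectors lie in gI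
  have he0 : e 0 ∈ gI := by
    have := hbr (e 3) (e 1)
    have h : br (e 3) (e 1) = -(e 0) := by
      funext i; fin_cases i <;> simp [br, e, Pi.single_apply]
    rw [h] at this; simpa using neg_mem this
  have he1 : e 1 ∈ gI := by
    have := hbr (e 3) (e 0)
    have h : br (e 3) (e 0) = e 1 := by
      funext i; fin_cases i <;> simp [br, e, Pi.single_apply]
    rwa [h] at this
  have he2 : e 2 ∈ gI := by
    have := hbr (e 0) (e 1)
    have h : br (e 0) (e 1) = -(e 2) := by
      funext i; fin_cases i <;> simp [br, e, Pi.single_apply]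
    rw [h] at this; simpa using neg_mem this
  -- every element of gI has vanishing coordinates 3 and 4 (nilpotency)
  have hW : ∀ x ∈ gI, x 3 = 0 ∧ x 4 = 0 := by
    intro x hx
    by_contra h
    have hD : 0 < x 3 ^ 2 + x 4 ^ 2 := by
      rcases not_and_or.mp h with h | h <;> positivity
    have hDne : x 3 ^ 2 + x 4 ^ 2 ≠ 0 := ne_of_gt hD
    have key : ∀ n : ℕ, ∀ p q : ℝ, ∃ w ∈ lcsOf gI n, w 0 = p ∧ w 1 = q ∧ w 3 = 0 ∧ w 4 = 0 := by
      intro n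
      induction n with
      | zero =>
        intro p q
        refine ⟨p • e 0 + q • e 1, ?_, ?_, ?_, ?_, ?_⟩
        · exact add_mem (Submodule.smul_mem _ _ he0) (Submodule.smul_mem _ _ he1)
        all_goals simp [e, Pi.single_apply]
      | succ n ih =>
        intro p q
        set D := x 3 ^ 2 + x 4 ^ 2 with hDdef
        obtain ⟨w, hw, h0, h1, h3, h4⟩ := ih ((-(x 4) * p + x 3 * q) / D) ((-(x 3) * p - x 4 * q) / D)
        refine ⟨br x w, Submodule.subset_span ⟨x, hx, w, hw, rfl⟩, ?_, ?_, ?_, ?_⟩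
        · show br x w 0 = p
          simp only [br]
          simp only [Matrix.cons_val_zero]
          rw [h0, h1, h3, h4]
          field_simp
          ring
        · show br x w 1 = q
          simp only [br]
          simp only [Matrix.cons_val_one, Matrix.head_cons, Matrix.cons_val_zero]
          rw [h0, h1, h3, h4]
          field_simp
          ring
        · simp [br]
        · simp [br]
    obtain ⟨w, hw, h0, -⟩ := key k 1 0
    rw [hk, Submodule.mem_bot] at hw
    rw [hw] at h0
    norm_num at h0
  -- every element of a has vanishing coordinates 0, 1, 2 (orthogonality)
  have hA : ∀ y ∈ a, y 0 = 0 ∧ y 1 = 0 ∧ y 2 = 0 := by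
    intro y hy
    have o0 := horth _ he0 y hy
    have o1 := horth _ he1 y hy
    have o2 := horth _ he2 y hy
    simp [gm, e, Pi.single_apply] at o0 o1 o2
    refine ⟨by linarith, by linarith, by linarith⟩
  -- hence e 3 and e 4 lie in a
  have hin : ∀ i : Fin 5, i = 3 ∨ i = 4 → e i ∈ a := by
    rintro i hi
    obtain ⟨g, hg, y, hy, hgy⟩ := Submodule.mem_sup.mp (hmem (e i))
    obtain ⟨hg3, hg4⟩ := hW g hg
    obtain ⟨hy0, hy1, hy2⟩ := hA y hy
    have hy' : y = e i := by
      have h0 := congrFun hgy 0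
      have h1 := congrFun hgy 1
      have h2 := congrFun hgy 2
      have h3 := congrFun hgy 3
      have h4 := congrFun hgy 4
      simp [Pi.add_apply, hy0, hy1, hy2, hg3, hg4] at h0 h1 h2 h3 h4
      funext j; fin_cases j <;> rcases hi with hi | hi <;> subst hi <;>
        simp_all [e, Pi.single_apply]
    rw [← hy']; exact hy
  have h34 := habel _ (hin 4 (Or.inr rfl)) _ (hin 3 (Or.inl rfl))
  have := congrFun h34 0
  simp [br, e, Pi.single_apply] at this
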